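/- Let p be an odd prime, Fp = ZMod p, let n ≥ 2, let k be odd with 1 ≤ k ≤ n−1, and take s = 1. Then the number of distinct sets of the form { Q_P·M·Q_P⁻¹ : M ∈ T(n,k,1) }, as P ranges over GL_n(Fp) and Q_P = [[P,0],[0,1]] ∈ GL_{n+1}(Fp), equals |GL_n(Fp)| divided by ((p−1)/2) · |{ U a k×k matrix over Fp : Uᵀ·U = I }| · |GL_{n−1−k}(Fp)| · p^{k(n−1−k) + (n−1)}. -/

import Mathlib

open Matrix

/-- `d_i` (0-indexed): `d i = 1` for `i + 1 < k`, `d i = s` for `i + 1 = k`,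
and `d i = 0` otherwise. -/
def dvec (p k : ℕ) (s : ZMod p) (i : ℕ) : ZMod p :=
  if i + 1 < k then 1 else if i + 1 = k then s else 0

/-- The `(n+1)×(n+1)` matrix `τ(r)`: it agrees with the identity except that its
`(i, n+1)` entry is `r_i` for `1 ≤ i ≤ n` and its `(n, j)` entry is `d_j·r_j`
for `1 ≤ j ≤ n-1` (stated here with 0-indexed rows and columns). -/
def tauM (p n k : ℕ) (s : ZMod p) (r : Fin n → ZMod p) :
    Matrix (Fin (n + 1)) (Fin (n + 1)) (ZMod p) :=
  Matrix.of fun i j =>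
    if i.val = j.val then 1
    else if j.val = n then (if h : i.val < n then r ⟨i.val, h⟩ else 0)
    else if i.val = n - 1 then
      dvec p k s j.val * (if h : j.val < n then r ⟨j.val, h⟩ else 0)
    else 0

/-- `T(n,k,s) = { τ(r) : r ∈ Fp^n }`. -/
def Tset (p n k : ℕ) (s : ZMod p) :
    Set (Matrix (Fin (n + 1)) (Fin (n + 1)) (ZMod p)) :=
  { M | ∃ r : Fin n → ZMod p, M = tauM p n k s r }

/-- The block matrix `Q = [[P, 0], [0, 1]]` in `M_{n+1}(Fp)`. -/
def QofP (p n : ℕ) (P : Matrix (Fin n) (Fin n) (ZMod p)) :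
    Matrix (Fin (n + 1)) (Fin (n + 1)) (ZMod p) :=
  Matrix.reindex finSumFinEquiv finSumFinEquiv
    (Matrix.fromBlocks P 0 0 (1 : Matrix (Fin 1) (Fin 1) (ZMod p)))

section Aux
variable {p : ℕ}

def padv {n : ℕ} (r : Fin n → ZMod p) : Fin (n + 1) → ZMod p :=
  fun i => if h : i.val < n then r ⟨i.val, h⟩ else 0

def env (p n : ℕ) : Fin (n + 1) → ZMod p := fun i => if i.val = n then 1 else 0

def e1v (p n : ℕ) : Fin n → ZMod p := fun j => if j.val = n - 1 then 1 else 0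

def wv (p k : ℕ) {n : ℕ} (r : Fin n → ZMod p) : Fin n → ZMod p :=
  fun j => dvec p k 1 j.val * r j

def Dmat (p k n : ℕ) : Matrix (Fin n) (Fin n) (ZMod p) :=
  Matrix.diagonal fun i => dvec p k 1 i.val

def shapeM {n : ℕ} (a c b : Fin n → ZMod p) :
    Matrix (Fin (n + 1)) (Fin (n + 1)) (ZMod p) :=
  1 + vecMulVec (padv a) (env p n) + vecMulVec (padv c) (padv b)

def CondP (p k : ℕ) {n : ℕ} (P : Matrix (Fin n) (Fin n) (ZMod p)) : Prop :=
  ∃ l : ZMod p, l ≠ 0 ∧ Pᵀ * Dmat p k n * P = l • Dmat p k n ∧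
    P *ᵥ e1v p n = l • e1v p n

-- basic matrix helpers
theorem mul_vecMulVec {n m : ℕ} (M : Matrix (Fin n) (Fin n) (ZMod p))
    (a : Fin n → ZMod p) (b : Fin m → ZMod p) :
    M * vecMulVec a b = vecMulVec (M *ᵥ a) b := by
  ext i j
  simp [Matrix.mul_apply, Matrix.vecMulVec_apply, Matrix.mulVec, dotProduct,
    Finset.sum_mul, mul_assoc]

theorem vecMulVec_mul {n m : ℕ} (a : Fin m → ZMod p) (b : Fin n → ZMod p)
    (M : Matrix (Fin n) (Fin n) (ZMod p)) :
    vecMulVec a b * M = vecMulVec a (b ᵥ* M) := by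
  ext i j
  simp [Matrix.mul_apply, Matrix.vecMulVec_apply, Matrix.vecMul, dotProduct,
    Finset.mul_sum, mul_assoc]

-- QofP lemmas
theorem QofP_apply {n : ℕ} (P : Matrix (Fin n) (Fin n) (ZMod p)) (i j : Fin (n+1)) :
    QofP p n P i j =
      if hi : i.val < n then
        (if hj : j.val < n then P ⟨i.val, hi⟩ ⟨j.val, hj⟩ else 0)
      else (if j.val < n then 0 else 1) := by
  induction i using Fin.addCases with
  | left i =>
    induction j using Fin.addCases with
    | left j =>
      simp [QofP, Matrix.reindex_apply, Matrix.submatrix_apply, i.isLt, j.isLt,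
        Fin.eta]
    | right j =>
      have : ¬ ((Fin.natAdd n j).val < n) := by simp
      simp [QofP, Matrix.reindex_apply, Matrix.submatrix_apply, i.isLt, this]
  | right i =>
    have hi : ¬ ((Fin.natAdd n i).val < n) := by simp
    induction j using Fin.addCases with
    | left j =>
      simp [QofP, Matrix.reindex_apply, Matrix.submatrix_apply, hi, j.isLt]
    | right j =>
      have hj : ¬ ((Fin.natAdd n j).val < n) := by simp
      simp [QofP, Matrix.reindex_apply, Matrix.submatrix_apply, hi, hj,
        Matrix.one_apply, Subsingleton.elim i j]

theorem QofP_mul {n : ℕ} (P R : Matrix (Fin n) (Fin n) (ZMod p)) :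
    QofP p n P * QofP p n R = QofP p n (P * R) := by
  simp only [QofP, Matrix.reindex_apply]
  rw [Matrix.submatrix_mul_equiv, Matrix.fromBlocks_multiply]
  simp

theorem QofP_one {n : ℕ} : QofP p n (1 : Matrix (Fin n) (Fin n) (ZMod p)) = 1 := by
  simp only [QofP, Matrix.fromBlocks_one, Matrix.reindex_apply, Matrix.submatrix_one_equiv]

@[simp] theorem padv_castSucc {n : ℕ} (r : Fin n → ZMod p) (i : Fin n) :
    padv r i.castSucc = r i := by
  simp [padv, i.isLt, Fin.eta]

@[simp] theorem padv_last {n : ℕ} (r : Fin n → ZMod p) :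
    padv r (Fin.last n) = 0 := by
  simp [padv]

@[simp] theorem env_castSucc {n : ℕ} (i : Fin n) : env p n i.castSucc = 0 := by
  simp [env]; omega

@[simp] theorem env_last {n : ℕ} : env p n (Fin.last n) = 1 := by
  simp [env]

theorem QofP_apply_cs_cs {n : ℕ} (P : Matrix (Fin n) (Fin n) (ZMod p)) (i j : Fin n) :
    QofP p n P i.castSucc j.castSucc = P i j := by
  rw [QofP_apply]
  simp [i.isLt, j.isLt, Fin.eta]

theorem QofP_apply_cs_last {n : ℕ} (P : Matrix (Fin n) (Fin n) (ZMod p)) (i : Fin n) :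
    QofP p n P i.castSucc (Fin.last n) = 0 := by
  rw [QofP_apply]
  simp [i.isLt]

theorem QofP_apply_last_cs {n : ℕ} (P : Matrix (Fin n) (Fin n) (ZMod p)) (j : Fin n) :
    QofP p n P (Fin.last n) j.castSucc = 0 := by
  rw [QofP_apply]
  simp [j.isLt]

theorem QofP_apply_last_last {n : ℕ} (P : Matrix (Fin n) (Fin n) (ZMod p)) :
    QofP p n P (Fin.last n) (Fin.last n) = 1 := by
  rw [QofP_apply]
  simp

theorem QofP_mulVec_padv {n : ℕ} (P : Matrix (Fin n) (Fin n) (ZMod p))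
    (r : Fin n → ZMod p) : QofP p n P *ᵥ padv r = padv (P *ᵥ r) := by
  funext i
  induction i using Fin.lastCases with
  | last =>
    simp only [Matrix.mulVec, dotProduct, Fin.sum_univ_castSucc,
      QofP_apply_last_cs, QofP_apply_last_last, padv_castSucc, padv_last,
      zero_mul, one_mul, Finset.sum_const_zero, zero_add, mul_zero]
  | cast i =>
    simp only [Matrix.mulVec, dotProduct, Fin.sum_univ_castSucc,
      QofP_apply_cs_cs, QofP_apply_cs_last, padv_castSucc, padv_last,
      zero_mul, mul_zero, add_zero]

theorem padv_vecMul_QofP {n : ℕ} (P : Matrix (Fin n) (Fin n) (ZMod p))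
    (r : Fin n → ZMod p) : padv r ᵥ* QofP p n P = padv (r ᵥ* P) := by
  funext j
  induction j using Fin.lastCases with
  | last =>
    simp only [Matrix.vecMul, dotProduct, Fin.sum_univ_castSucc,
      QofP_apply_cs_last, QofP_apply_last_last, padv_castSucc, padv_last,
      zero_mul, mul_zero, mul_one, Finset.sum_const_zero, zero_add, add_zero]
  | cast j =>
    simp only [Matrix.vecMul, dotProduct, Fin.sum_univ_castSucc,
      QofP_apply_cs_cs, QofP_apply_last_cs, padv_castSucc, padv_last,
      zero_mul, mul_zero, add_zero]

theorem env_vecMul_QofP {n : ℕ} (P : Matrix (Fin n) (Fin n) (ZMod p)) :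
    env p n ᵥ* QofP p n P = env p n := by
  funext j
  induction j using Fin.lastCases with
  | last =>
    simp only [Matrix.vecMul, dotProduct, Fin.sum_univ_castSucc,
      QofP_apply_cs_last, QofP_apply_last_last, env_castSucc, env_last,
      zero_mul, mul_zero, mul_one, Finset.sum_const_zero, zero_add]
  | cast j =>
    simp only [Matrix.vecMul, dotProduct, Fin.sum_univ_castSucc,
      QofP_apply_cs_cs, QofP_apply_last_cs, env_castSucc, env_last,
      zero_mul, mul_zero, add_zero, mul_one, Finset.sum_const_zero, zero_add]

theorem QofP_inv {n : ℕ} (P : GL (Fin n) (ZMod p)) :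
    (QofP p n (P : Matrix (Fin n) (Fin n) (ZMod p)))⁻¹ =
      QofP p n ((P⁻¹ : GL (Fin n) (ZMod p)) : Matrix (Fin n) (Fin n) (ZMod p)) := by
  apply Matrix.inv_eq_right_inv
  rw [QofP_mul, ← Units.val_mul, mul_inv_cancel, Units.val_one, QofP_one]

theorem tau_eq_shape {n k : ℕ} (hk1 : 1 ≤ k) (hk2 : k ≤ n - 1) (hn : 2 ≤ n)
    (r : Fin n → ZMod p) :
    tauM p n k 1 r = shapeM r (e1v p n) (wv p k r) := by
  have hd : dvec p k 1 (n-1) = 0 := by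
    unfold dvec
    have h1 : ¬ (n - 1 + 1 < k) := by omega
    have h2 : ¬ (n - 1 + 1 = k) := by omega
    simp [h1, h2]
  ext i j
  induction i using Fin.lastCases with
  | last =>
    induction j using Fin.lastCases with
    | last =>
      simp [tauM, shapeM, Matrix.one_apply, Matrix.vecMulVec_apply]
    | cast j =>
      have h1 : ¬ ((Fin.last n).val = (j.castSucc).val) := by
        simp [Fin.last]; omega
      have h2 : ¬ ((j.castSucc).val = n) := by simp; omega
      have h3 : ¬ ((Fin.last n).val = n - 1) := by simp [Fin.last]; omega
      have h4 : Fin.last n ≠ j.castSucc := by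
        simp [Fin.ext_iff] at h1 ⊢; omega
      have h5 : ¬ ((n : ℕ) = (j : ℕ)) := by omega
      have h6 : ¬ ((j : ℕ) = n) := by omega
      have h7 : ¬ ((n : ℕ) = n - 1) := by omega
      simp [tauM, shapeM, Matrix.one_apply, Matrix.vecMulVec_apply, h1, h2, h3, h4,
        h5, h6, h7]
  | cast i =>
    induction j using Fin.lastCases with
    | last =>
      have h1 : ¬ ((i.castSucc).val = (Fin.last n).val) := by
        simp [Fin.last]; omega
      have h5 : ¬ ((i : ℕ) = n) := by omega
      simp [tauM, shapeM, Matrix.one_apply, Matrix.vecMulVec_apply, h1, h5, padv,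
        i.isLt, Fin.eta, Fin.ne_of_lt (Fin.castSucc_lt_last i)]
    | cast j =>
      have h2 : ¬ ((j.castSucc).val = n) := by simp; omega
      by_cases hij : i = j
      · subst hij
        by_cases hnm : i.val = n - 1
        · simp [tauM, shapeM, Matrix.one_apply, Matrix.vecMulVec_apply, h2, e1v, wv,
            hnm, hd]
        · simp [tauM, shapeM, Matrix.one_apply, Matrix.vecMulVec_apply, h2, e1v, wv, hnm]
      · have h1 : ¬ ((i.castSucc).val = (j.castSucc).val) := by
          simp [Fin.ext_iff] at hij ⊢; omega
        have h5 : ¬ ((j : ℕ) = n) := by omega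
        have h6 : ¬ ((i : ℕ) = (j : ℕ)) := by
          simp [Fin.ext_iff] at h1; omega
        by_cases hnm : i.val = n - 1
        · have h7 : ¬ (n - 1 = (j : ℕ)) := by omega
          simp [tauM, shapeM, Matrix.one_apply, Matrix.vecMulVec_apply, h6, h5, e1v, wv,
            hnm, hij, Fin.castSucc_inj, h7]
        · simp [tauM, shapeM, Matrix.one_apply, Matrix.vecMulVec_apply, h6, h5, e1v, wv,
            hnm, hij, Fin.castSucc_inj]

theorem conj_tau {n k : ℕ} (hk1 : 1 ≤ k) (hk2 : k ≤ n - 1) (hn : 2 ≤ n)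
    (P : GL (Fin n) (ZMod p)) (r : Fin n → ZMod p) :
    QofP p n (P : Matrix (Fin n) (Fin n) (ZMod p)) * tauM p n k 1 r *
      (QofP p n (P : Matrix (Fin n) (Fin n) (ZMod p)))⁻¹ =
    shapeM ((P : Matrix (Fin n) (Fin n) (ZMod p)) *ᵥ r)
      ((P : Matrix (Fin n) (Fin n) (ZMod p)) *ᵥ e1v p n)
      (wv p k r ᵥ* ((P⁻¹ : GL (Fin n) (ZMod p)) : Matrix (Fin n) (Fin n) (ZMod p))) := by
  have hQQ : QofP p n (P : Matrix (Fin n) (Fin n) (ZMod p)) *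
      QofP p n ((P⁻¹ : GL (Fin n) (ZMod p)) : Matrix (Fin n) (Fin n) (ZMod p)) = 1 := by
    rw [QofP_mul, ← Units.val_mul, mul_inv_cancel, Units.val_one, QofP_one]
  rw [tau_eq_shape hk1 hk2 hn, QofP_inv]
  simp only [shapeM, mul_add, add_mul, mul_one, mul_vecMulVec, vecMulVec_mul, hQQ,
    QofP_mulVec_padv, padv_vecMul_QofP, env_vecMul_QofP]

-- entry lemmas for shapeM
theorem shapeM_apply_cs_last {n : ℕ} (a c b : Fin n → ZMod p) (i : Fin n) :
    shapeM a c b i.castSucc (Fin.last n) = a i := by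
  simp [shapeM, Matrix.one_apply, Fin.castSucc_lt_last i, Fin.ne_of_lt, Matrix.vecMulVec_apply]

theorem shapeM_apply_cs_cs {n : ℕ} (a c b : Fin n → ZMod p) (i j : Fin n) :
    shapeM a c b i.castSucc j.castSucc = (if i = j then 1 else 0) + c i * b j := by
  simp [shapeM, Matrix.one_apply, Matrix.vecMulVec_apply, Fin.castSucc_inj]

theorem vecMul_smul_mat {n m : ℕ} (x : Fin n → ZMod p) (c : ZMod p)
    (M : Matrix (Fin n) (Fin m) (ZMod p)) : x ᵥ* (c • M) = c • (x ᵥ* M) := by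
  funext j
  simp only [Matrix.vecMul, dotProduct, Matrix.smul_apply, Pi.smul_apply,
    smul_eq_mul, Finset.mul_sum]
  apply Finset.sum_congr rfl
  intros
  ring

theorem wv_eq_vecMul {n k : ℕ} (r : Fin n → ZMod p) :
    wv p k r = r ᵥ* Dmat p k n := by
  funext j
  simp [wv, Dmat, Matrix.vecMul_diagonal, mul_comm]

theorem padv_smul {n : ℕ} (l : ZMod p) (c : Fin n → ZMod p) :
    padv (l • c) = l • padv c := by
  funext i
  by_cases h : i.val < n <;> simp [padv, h]

theorem shapeM_smul {n : ℕ} [Fact p.Prime] (a c b : Fin n → ZMod p) {l : ZMod p} (hl : l ≠ 0) :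
    shapeM a (l • c) (l⁻¹ • b) = shapeM a c b := by
  unfold shapeM
  congr 1
  rw [padv_smul, padv_smul]
  ext i j
  simp only [Matrix.vecMulVec_apply, Pi.smul_apply, smul_eq_mul]
  rw [mul_mul_mul_comm]
  rw [mul_inv_cancel₀ hl, one_mul]

theorem main_char {n k : ℕ} [Fact p.Prime] (hk1 : 1 ≤ k) (hk2 : k ≤ n - 1) (hn : 2 ≤ n)
    (P : GL (Fin n) (ZMod p)) :
    ((fun M => QofP p n (P : Matrix (Fin n) (Fin n) (ZMod p)) * M *
        (QofP p n (P : Matrix (Fin n) (Fin n) (ZMod p)))⁻¹) '' Tset p n k 1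
      = Tset p n k 1) ↔ CondP p k (P : Matrix (Fin n) (Fin n) (ZMod p)) := by
  have hPPinv : (P : Matrix (Fin n) (Fin n) (ZMod p)) *
      ((P⁻¹ : GL (Fin n) (ZMod p)) : Matrix (Fin n) (Fin n) (ZMod p)) = 1 := by
    rw [← Units.val_mul, mul_inv_cancel, Units.val_one]
  have hPinvP : ((P⁻¹ : GL (Fin n) (ZMod p)) : Matrix (Fin n) (Fin n) (ZMod p)) *
      (P : Matrix (Fin n) (Fin n) (ZMod p)) = 1 := by
    rw [← Units.val_mul, inv_mul_cancel, Units.val_one]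
  constructor
  · intro hEq
    have key : ∀ r : Fin n → ZMod p, ∃ r' : Fin n → ZMod p,
        shapeM ((P : Matrix (Fin n) (Fin n) (ZMod p)) *ᵥ r)
          ((P : Matrix (Fin n) (Fin n) (ZMod p)) *ᵥ e1v p n)
          (wv p k r ᵥ* ((P⁻¹ : GL (Fin n) (ZMod p)) : Matrix (Fin n) (Fin n) (ZMod p)))
          = shapeM r' (e1v p n) (wv p k r') := by
      intro r
      have hmem : (QofP p n (P : Matrix (Fin n) (Fin n) (ZMod p)) * tauM p n k 1 r *
          (QofP p n (P : Matrix (Fin n) (Fin n) (ZMod p)))⁻¹) ∈ Tset p n k 1 := by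
        rw [← hEq]
        exact ⟨tauM p n k 1 r, ⟨r, rfl⟩, rfl⟩
      obtain ⟨r', hr'⟩ := hmem
      refine ⟨r', ?_⟩
      rw [← conj_tau hk1 hk2 hn, hr', tau_eq_shape hk1 hk2 hn]
    have key2 : ∀ (r : Fin n → ZMod p) (i j : Fin n),
        ((P : Matrix (Fin n) (Fin n) (ZMod p)) *ᵥ e1v p n) i *
          (wv p k r ᵥ* ((P⁻¹ : GL (Fin n) (ZMod p)) : Matrix (Fin n) (Fin n) (ZMod p))) j
          = e1v p n i * wv p k ((P : Matrix (Fin n) (Fin n) (ZMod p)) *ᵥ r) j := by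
      intro r i j
      obtain ⟨r', hsh⟩ := key r
      have ha : (P : Matrix (Fin n) (Fin n) (ZMod p)) *ᵥ r = r' := by
        funext i
        have h := congrFun (congrFun hsh i.castSucc) (Fin.last n)
        rwa [shapeM_apply_cs_last, shapeM_apply_cs_last] at h
      have h2 := congrFun (congrFun hsh i.castSucc) j.castSucc
      rw [shapeM_apply_cs_cs, shapeM_apply_cs_cs, ← ha] at h2
      exact add_left_cancel h2
    have h0n : 0 < n := by omega
    set i0 : Fin n := ⟨0, h0n⟩ with hi0
    set r0 : Fin n → ZMod p := Pi.single i0 1 with hr0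
    have hw0 : wv p k r0 = r0 := by
      funext j
      by_cases hj : j = i0
      · have hd : dvec p k 1 (j : ℕ) = 1 := by
          have hj0 : (j : ℕ) = 0 := by rw [hj]
          rw [hj0]
          unfold dvec
          rcases Nat.lt_or_ge 1 k with h | h
          · simp [h]
          · have h2 : 0 + 1 = k := by omega
            simp [h2]
        simp [wv, hd]
      · simp [wv, hr0, Pi.single_eq_of_ne hj]
    set u : Fin n → ZMod p :=
      r0 ᵥ* ((P⁻¹ : GL (Fin n) (ZMod p)) : Matrix (Fin n) (Fin n) (ZMod p)) with hu
    have hune : u ≠ 0 := by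
      intro h0
      have h1 : r0 ᵥ* (((P⁻¹ : GL (Fin n) (ZMod p)) : Matrix (Fin n) (Fin n) (ZMod p)) *
          (P : Matrix (Fin n) (Fin n) (ZMod p))) = 0 := by
        rw [← Matrix.vecMul_vecMul, ← hu, h0, Matrix.zero_vecMul]
      rw [hPinvP, Matrix.vecMul_one] at h1
      have h2 : r0 i0 = 1 := by simp [hr0]
      rw [h1] at h2
      simp at h2
    obtain ⟨j0, hj0⟩ : ∃ j0, u j0 ≠ 0 := Function.ne_iff.mp hune
    set l : ZMod p := wv p k ((P : Matrix (Fin n) (Fin n) (ZMod p)) *ᵥ r0) j0 * (u j0)⁻¹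
      with hldef
    have hPe : (P : Matrix (Fin n) (Fin n) (ZMod p)) *ᵥ e1v p n = l • e1v p n := by
      funext i
      have h := key2 r0 i j0
      rw [hw0] at h
      have h2 : ((P : Matrix (Fin n) (Fin n) (ZMod p)) *ᵥ e1v p n) i * (u j0 * (u j0)⁻¹)
          = e1v p n i * l := by
        rw [← mul_assoc, h, hldef]; ring
      rw [mul_inv_cancel₀ hj0, mul_one] at h2
      rw [h2]
      simp [mul_comm]
    have hl : l ≠ 0 := by
      intro h0
      rw [h0, zero_smul] at hPe
      have h1 := congrArg
        (fun v => ((P⁻¹ : GL (Fin n) (ZMod p)) : Matrix (Fin n) (Fin n) (ZMod p)) *ᵥ v) hPe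
      simp only [Matrix.mulVec_mulVec, hPinvP, Matrix.one_mulVec, Matrix.mulVec_zero] at h1
      have h2 : e1v p n ⟨n - 1, by omega⟩ = 1 := by simp [e1v]
      rw [h1] at h2
      simp at h2
    have hrow : ∀ (r : Fin n → ZMod p) (j : Fin n),
        l * (wv p k r ᵥ* ((P⁻¹ : GL (Fin n) (ZMod p)) : Matrix (Fin n) (Fin n) (ZMod p))) j
          = wv p k ((P : Matrix (Fin n) (Fin n) (ZMod p)) *ᵥ r) j := by
      intro r j
      have h := key2 r ⟨n - 1, by omega⟩ j
      have he : e1v p n ⟨n - 1, by omega⟩ = 1 := by simp [e1v]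
      rw [hPe] at h
      simp only [Pi.smul_apply, smul_eq_mul, he, mul_one, one_mul] at h
      exact h
    have hM : l • (Dmat p k n * ((P⁻¹ : GL (Fin n) (ZMod p)) : Matrix (Fin n) (Fin n) (ZMod p)))
        = (P : Matrix (Fin n) (Fin n) (ZMod p))ᵀ * Dmat p k n := by
      ext m j
      have h := hrow (Pi.single m 1) j
      rw [wv_eq_vecMul, wv_eq_vecMul, Matrix.vecMul_vecMul, Matrix.vecMul_mulVec] at h
      simp only [Matrix.single_vecMul, one_mul] at h
      simpa [Matrix.smul_apply, smul_eq_mul] using h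
    refine ⟨l, hl, ?_, hPe⟩
    calc (P : Matrix (Fin n) (Fin n) (ZMod p))ᵀ * Dmat p k n *
          (P : Matrix (Fin n) (Fin n) (ZMod p))
        = l • (Dmat p k n * ((P⁻¹ : GL (Fin n) (ZMod p)) : Matrix (Fin n) (Fin n) (ZMod p))) *
          (P : Matrix (Fin n) (Fin n) (ZMod p)) := by rw [hM]
      _ = l • Dmat p k n := by
          rw [smul_mul_assoc, mul_assoc, hPinvP, mul_one]
  · rintro ⟨l, hl, hD, hcol⟩
    have hDP : Dmat p k n * ((P⁻¹ : GL (Fin n) (ZMod p)) : Matrix (Fin n) (Fin n) (ZMod p))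
        = l⁻¹ • ((P : Matrix (Fin n) (Fin n) (ZMod p))ᵀ * Dmat p k n) := by
      have h1 : (P : Matrix (Fin n) (Fin n) (ZMod p))ᵀ * Dmat p k n
          = l • (Dmat p k n * ((P⁻¹ : GL (Fin n) (ZMod p)) : Matrix (Fin n) (Fin n) (ZMod p)))
          := by
        calc (P : Matrix (Fin n) (Fin n) (ZMod p))ᵀ * Dmat p k n
            = (P : Matrix (Fin n) (Fin n) (ZMod p))ᵀ * Dmat p k n *
              ((P : Matrix (Fin n) (Fin n) (ZMod p)) *
                ((P⁻¹ : GL (Fin n) (ZMod p)) : Matrix (Fin n) (Fin n) (ZMod p))) := by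
              rw [hPPinv, mul_one]
          _ = ((P : Matrix (Fin n) (Fin n) (ZMod p))ᵀ * Dmat p k n *
                (P : Matrix (Fin n) (Fin n) (ZMod p))) *
              ((P⁻¹ : GL (Fin n) (ZMod p)) : Matrix (Fin n) (Fin n) (ZMod p)) := by
              rw [mul_assoc, mul_assoc, mul_assoc]
          _ = l • (Dmat p k n * ((P⁻¹ : GL (Fin n) (ZMod p)) : Matrix (Fin n) (Fin n) (ZMod p)))
              := by rw [hD, smul_mul_assoc]
      rw [h1, smul_smul, inv_mul_cancel₀ hl, one_smul]
    have hconj : ∀ r : Fin n → ZMod p,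
        QofP p n (P : Matrix (Fin n) (Fin n) (ZMod p)) * tauM p n k 1 r *
          (QofP p n (P : Matrix (Fin n) (Fin n) (ZMod p)))⁻¹
          = tauM p n k 1 ((P : Matrix (Fin n) (Fin n) (ZMod p)) *ᵥ r) := by
      intro r
      rw [conj_tau hk1 hk2 hn, tau_eq_shape hk1 hk2 hn]
      have hb : wv p k r ᵥ* ((P⁻¹ : GL (Fin n) (ZMod p)) : Matrix (Fin n) (Fin n) (ZMod p))
          = l⁻¹ • wv p k ((P : Matrix (Fin n) (Fin n) (ZMod p)) *ᵥ r) := by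
        rw [wv_eq_vecMul, wv_eq_vecMul, Matrix.vecMul_vecMul, hDP, vecMul_smul_mat,
          ← Matrix.vecMul_mulVec]
      rw [hcol, hb]
      exact shapeM_smul _ _ _ hl
    ext M
    constructor
    · rintro ⟨M', ⟨r, rfl⟩, rfl⟩
      exact ⟨(P : Matrix (Fin n) (Fin n) (ZMod p)) *ᵥ r, hconj r⟩
    · rintro ⟨r', rfl⟩
      refine ⟨tauM p n k 1 (((P⁻¹ : GL (Fin n) (ZMod p)) : Matrix (Fin n) (Fin n) (ZMod p)) *ᵥ r'),
        ⟨_, rfl⟩, ?_⟩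
      show QofP p n (P : Matrix (Fin n) (Fin n) (ZMod p)) *
          tauM p n k 1 (((P⁻¹ : GL (Fin n) (ZMod p)) : Matrix (Fin n) (Fin n) (ZMod p)) *ᵥ r') *
          (QofP p n (P : Matrix (Fin n) (Fin n) (ZMod p)))⁻¹ = tauM p n k 1 r'
      rw [hconj]
      congr 1
      rw [Matrix.mulVec_mulVec, hPPinv, Matrix.one_mulVec]

instance conjAct (p n : ℕ) :
    MulAction (GL (Fin n) (ZMod p)) (Set (Matrix (Fin (n+1)) (Fin (n+1)) (ZMod p))) where
  smul P S := (fun M => QofP p n (P : Matrix (Fin n) (Fin n) (ZMod p)) * M *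
      (QofP p n (P : Matrix (Fin n) (Fin n) (ZMod p)))⁻¹) '' S
  one_smul S := by
    show (fun M => QofP p n ((1 : GL (Fin n) (ZMod p)) : Matrix (Fin n) (Fin n) (ZMod p)) * M *
      (QofP p n ((1 : GL (Fin n) (ZMod p)) : Matrix (Fin n) (Fin n) (ZMod p)))⁻¹) '' S = S
    have h1 : ((1 : GL (Fin n) (ZMod p)) : Matrix (Fin n) (Fin n) (ZMod p)) = 1 := rfl
    rw [h1, QofP_one, inv_one]
    simp
  mul_smul P R S := by
    show (fun M => QofP p n ((P * R : GL (Fin n) (ZMod p)) : Matrix (Fin n) (Fin n) (ZMod p)) * M *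
        (QofP p n ((P * R : GL (Fin n) (ZMod p)) : Matrix (Fin n) (Fin n) (ZMod p)))⁻¹) '' S =
      (fun M => QofP p n (P : Matrix (Fin n) (Fin n) (ZMod p)) * M *
        (QofP p n (P : Matrix (Fin n) (Fin n) (ZMod p)))⁻¹) ''
      ((fun M => QofP p n (R : Matrix (Fin n) (Fin n) (ZMod p)) * M *
        (QofP p n (R : Matrix (Fin n) (Fin n) (ZMod p)))⁻¹) '' S)
    rw [Set.image_image]
    apply Set.image_congr
    intro M _
    have h1 : ((P * R : GL (Fin n) (ZMod p)) : Matrix (Fin n) (Fin n) (ZMod p)) =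
        (P : Matrix (Fin n) (Fin n) (ZMod p)) * (R : Matrix (Fin n) (Fin n) (ZMod p)) :=
      Units.val_mul _ _
    rw [h1, ← QofP_mul, Matrix.mul_inv_rev]
    simp only [mul_assoc]

theorem card_range_eq_div (p n k : ℕ) [Fact p.Prime]
    (hk1 : 1 ≤ k) (hk2 : k ≤ n - 1) (hn : 2 ≤ n) :
    Nat.card (Set.range fun P : GL (Fin n) (ZMod p) =>
        (fun M => QofP p n (P : Matrix (Fin n) (Fin n) (ZMod p)) * M *
            (QofP p n (P : Matrix (Fin n) (Fin n) (ZMod p)))⁻¹) ''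
          Tset p n k 1) =
      Nat.card (GL (Fin n) (ZMod p)) /
        Nat.card {P : GL (Fin n) (ZMod p) // CondP p k (P : Matrix (Fin n) (Fin n) (ZMod p))} := by
  classical
  set G := GL (Fin n) (ZMod p)
  have horb : (Set.range fun P : G =>
      (fun M => QofP p n (P : Matrix (Fin n) (Fin n) (ZMod p)) * M *
          (QofP p n (P : Matrix (Fin n) (Fin n) (ZMod p)))⁻¹) '' Tset p n k 1)
      = MulAction.orbit G (Tset p n k 1) := rfl
  rw [horb]
  have hstab : ∀ P : G, P ∈ MulAction.stabilizer G (Tset p n k 1) ↔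
      CondP p k (P : Matrix (Fin n) (Fin n) (ZMod p)) := by
    intro P
    rw [MulAction.mem_stabilizer_iff]
    exact main_char hk1 hk2 hn P
  have h1 : Nat.card (MulAction.orbit G (Tset p n k 1)) =
      Nat.card (G ⧸ MulAction.stabilizer G (Tset p n k 1)) :=
    Nat.card_congr (MulAction.orbitEquivQuotientStabilizer G _)
  have h2 : Nat.card G = Nat.card (G ⧸ MulAction.stabilizer G (Tset p n k 1)) *
      Nat.card (MulAction.stabilizer G (Tset p n k 1)) :=
    Subgroup.card_eq_card_quotient_mul_card_subgroup _
  have h3 : Nat.card (MulAction.stabilizer G (Tset p n k 1)) =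
      Nat.card {P : G // CondP p k (P : Matrix (Fin n) (Fin n) (ZMod p))} :=
    Nat.card_congr (Equiv.subtypeEquivRight hstab)
  have hpos : 0 < Nat.card (MulAction.stabilizer G (Tset p n k 1)) :=
    Nat.card_pos
  rw [h1, ← h3, h2, Nat.mul_div_cancel _ hpos]

section Count

variable {p k t : ℕ}

def iT (k t : ℕ) (i : Fin k) : Fin (k + t + 1) := (Fin.castAdd t i).castSucc
def iM (k t : ℕ) (i : Fin t) : Fin (k + t + 1) := (Fin.natAdd k i).castSucc
def iL (k t : ℕ) : Fin (k + t + 1) := Fin.last (k + t)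

@[simp] theorem iT_val (i : Fin k) : (iT k t i : ℕ) = (i : ℕ) := rfl
@[simp] theorem iM_val (i : Fin t) : (iM k t i : ℕ) = k + (i : ℕ) := rfl
@[simp] theorem iL_val : (iL k t : ℕ) = k + t := rfl

theorem caseFin (i : Fin (k + t + 1)) :
    (∃ a, i = iT k t a) ∨ (∃ a, i = iM k t a) ∨ i = iL k t := by
  rcases Nat.lt_or_ge (i : ℕ) k with h | h
  · exact Or.inl ⟨⟨i, h⟩, by simp [Fin.ext_iff]⟩
  · rcases Nat.lt_or_ge (i : ℕ) (k + t) with h2 | h2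
    · exact Or.inr (Or.inl ⟨⟨(i : ℕ) - k, by omega⟩, by simp [Fin.ext_iff]; omega⟩)
    · have : (i : ℕ) = k + t := by have := i.isLt; omega
      exact Or.inr (Or.inr (by simp [Fin.ext_iff, this, iL]))

theorem sum_split (f : Fin (k + t + 1) → ZMod p) :
    ∑ i, f i = (∑ i : Fin k, f (iT k t i)) + (∑ i : Fin t, f (iM k t i)) + f (iL k t) := by
  rw [Fin.sum_univ_castSucc, Fin.sum_univ_add]
  rfl

theorem dvec_lt {m : ℕ} (h : m < k) : dvec p k 1 m = 1 := by
  unfold dvec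
  rcases Nat.lt_or_ge (m + 1) k with h2 | h2
  · simp [h2]
  · have h3 : m + 1 = k := by omega
    simp [h3]

theorem dvec_ge {m : ℕ} (h : k ≤ m) : dvec p k 1 m = 0 := by
  unfold dvec
  have h2 : ¬ (m + 1 < k) := by omega
  have h3 : ¬ (m + 1 = k) := by omega
  simp [h2, h3]

theorem quad_entry (P : Matrix (Fin (k+t+1)) (Fin (k+t+1)) (ZMod p)) (i j : Fin (k+t+1)) :
    (Pᵀ * Dmat p k (k+t+1) * P) i j = ∑ m : Fin k, P (iT k t m) i * P (iT k t m) j := by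
  have h1 : ∀ m : Fin (k+t+1), (Pᵀ * Dmat p k (k+t+1)) i m = P m i * dvec p k 1 (m : ℕ) := by
    intro m
    unfold Dmat
    rw [Matrix.mul_diagonal, Matrix.transpose_apply]
  rw [Matrix.mul_apply]
  simp only [h1]
  rw [sum_split]
  have hM : ∀ b : Fin t, P (iM k t b) i * dvec p k 1 ((iM k t b : Fin (k+t+1)) : ℕ) *
      P (iM k t b) j = 0 := by
    intro b
    rw [iM_val, dvec_ge (by omega), mul_zero, zero_mul]
  have hL : P (iL k t) i * dvec p k 1 ((iL k t : Fin (k+t+1)) : ℕ) * P (iL k t) j = 0 := by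
    rw [iL_val, dvec_ge (by omega), mul_zero, zero_mul]
  simp only [hM, hL, Finset.sum_const_zero, add_zero]
  apply Finset.sum_congr rfl
  intro m _
  rw [iT_val, dvec_lt m.isLt, mul_one]

theorem col_entry (P : Matrix (Fin (k+t+1)) (Fin (k+t+1)) (ZMod p)) (i : Fin (k+t+1)) :
    (P *ᵥ e1v p (k+t+1)) i = P i (iL k t) := by
  unfold Matrix.mulVec dotProduct
  rw [sum_split (fun j => P i j * e1v p (k+t+1) j)]
  have hT : ∀ a : Fin k, P i (iT k t a) * e1v p (k+t+1) (iT k t a) = 0 := by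
    intro a
    have : e1v p (k+t+1) (iT k t a) = 0 := by
      have h2 : ¬ ((a : ℕ) = k + t) := by have := a.isLt; omega
      simp [e1v, h2]
    rw [this, mul_zero]
  have hM : ∀ a : Fin t, P i (iM k t a) * e1v p (k+t+1) (iM k t a) = 0 := by
    intro a
    have : e1v p (k+t+1) (iM k t a) = 0 := by
      have h2 : ¬ (k + (a : ℕ) = k + t) := by have := a.isLt; omega
      simp [e1v, h2, a.isLt.ne]
    rw [this, mul_zero]
  have hL : e1v p (k+t+1) (iL k t) = 1 := by simp [e1v]
  simp only [hT, hM, hL, Finset.sum_const_zero, mul_one, zero_add]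

theorem e1v_eq (i : Fin (k+t+1)) :
    e1v p (k+t+1) i = if i = iL k t then 1 else 0 := by
  by_cases h : i = iL k t
  · simp [e1v, h]
  · have h2 : ¬ ((i : ℕ) = k + t) := by
      simp [Fin.ext_iff] at h; omega
    simp [e1v, h, h2]

abbrev SAset (p k : ℕ) : Type :=
  {A : Matrix (Fin k) (Fin k) (ZMod p) //
    ∃ l : ZMod p, l ≠ 0 ∧ Aᵀ * A = l • (1 : Matrix (Fin k) (Fin k) (ZMod p))}

noncomputable def lA (A : SAset p k) : ZMod p := Classical.choose A.2

theorem lA_spec (A : SAset p k) :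
    lA A ≠ 0 ∧ A.1ᵀ * A.1 = lA A • (1 : Matrix (Fin k) (Fin k) (ZMod p)) :=
  Classical.choose_spec A.2

theorem smul_one_inj (hk : 0 < k) {l l' : ZMod p}
    (h : l • (1 : Matrix (Fin k) (Fin k) (ZMod p)) = l' • 1) : l = l' := by
  have h2 := congrFun (congrFun h ⟨0, hk⟩) ⟨0, hk⟩
  simpa [Matrix.smul_apply, Matrix.one_apply] using h2

theorem sq_det_of_orth [Fact p.Prime] {A : Matrix (Fin k) (Fin k) (ZMod p)} {l : ZMod p}
    (hA : Aᵀ * A = l • (1 : Matrix (Fin k) (Fin k) (ZMod p))) :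
    A.det ^ 2 = l ^ k := by
  have h := congrArg Matrix.det hA
  rw [Matrix.det_mul, Matrix.det_transpose, Matrix.det_smul, Matrix.det_one,
    Fintype.card_fin, mul_one] at h
  rw [← h]; ring

theorem isUnit_of_orth [Fact p.Prime] {A : Matrix (Fin k) (Fin k) (ZMod p)} {l : ZMod p}
    (hl : l ≠ 0) (hA : Aᵀ * A = l • (1 : Matrix (Fin k) (Fin k) (ZMod p))) :
    IsUnit A := by
  rw [Matrix.isUnit_iff_isUnit_det, isUnit_iff_ne_zero]
  intro h0
  have h := sq_det_of_orth hA
  rw [h0] at h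
  have : l ^ k ≠ 0 := pow_ne_zero _ hl
  rw [← h] at this
  simp at this

theorem mulVec_eq_zero_of_unit [Fact p.Prime] {m : ℕ} {A : Matrix (Fin m) (Fin m) (ZMod p)}
    (hA : IsUnit A) {x : Fin m → ZMod p} (h : A *ᵥ x = 0) : x = 0 := by
  have h1 : A⁻¹ *ᵥ (A *ᵥ x) = x := by
    rw [Matrix.mulVec_mulVec, Matrix.nonsing_inv_mul _ (Matrix.isUnit_iff_isUnit_det _ |>.mp hA),
      Matrix.one_mulVec]
  rw [h, Matrix.mulVec_zero] at h1
  exact h1.symm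

variable (p k t) in
noncomputable def Phi (x : SAset p k × Matrix (Fin (t+1)) (Fin k) (ZMod p) ×
    GL (Fin t) (ZMod p) × (Fin t → ZMod p)) :
    Matrix (Fin (k+t+1)) (Fin (k+t+1)) (ZMod p) :=
  Matrix.of fun i j =>
    if hj : (j : ℕ) < k then
      (if hi : (i : ℕ) < k then x.1.1 ⟨i, hi⟩ ⟨j, hj⟩
       else x.2.1 ⟨(i : ℕ) - k, by have := i.isLt; omega⟩ ⟨j, hj⟩)
    else if hi : (i : ℕ) < k then 0
    else if hiL : (i : ℕ) = k + t then
      (if hjL : (j : ℕ) = k + t then lA x.1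
       else x.2.2.2 ⟨(j : ℕ) - k, by have := j.isLt; omega⟩)
    else if hjL : (j : ℕ) = k + t then 0
    else ((x.2.2.1 : Matrix (Fin t) (Fin t) (ZMod p)))
      ⟨(i : ℕ) - k, by have := i.isLt; omega⟩ ⟨(j : ℕ) - k, by have := j.isLt; omega⟩

section PhiEntries
variable (x : SAset p k × Matrix (Fin (t+1)) (Fin k) (ZMod p) ×
    GL (Fin t) (ZMod p) × (Fin t → ZMod p))

theorem Phi_TT (i j : Fin k) : Phi p k t x (iT k t i) (iT k t j) = x.1.1 i j := by
  simp [Phi, i.isLt, j.isLt, Fin.eta]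

theorem Phi_TM (i : Fin k) (j : Fin t) : Phi p k t x (iT k t i) (iM k t j) = 0 := by
  have h1 : ¬ ((iM k t j : Fin (k+t+1)) : ℕ) < k := by simp
  simp [Phi, i.isLt, h1]

theorem Phi_TL (i : Fin k) : Phi p k t x (iT k t i) (iL k t) = 0 := by
  have h1 : ¬ ((iL k t : Fin (k+t+1)) : ℕ) < k := by simp
  simp [Phi, i.isLt, h1]

theorem Phi_MT (i : Fin t) (j : Fin k) :
    Phi p k t x (iM k t i) (iT k t j) = x.2.1 ⟨(i : ℕ), by omega⟩ j := by
  have h2 : ¬ (k + (i:ℕ) < k) := by omega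
  simp [Phi, h2, j.isLt]

theorem Phi_LT (j : Fin k) :
    Phi p k t x (iL k t) (iT k t j) = x.2.1 ⟨t, by omega⟩ j := by
  have h2 : ¬ (k + t < k) := by omega
  simp [Phi, h2, j.isLt]

theorem Phi_MM (i j : Fin t) :
    Phi p k t x (iM k t i) (iM k t j) = (x.2.2.1 : Matrix (Fin t) (Fin t) (ZMod p)) i j := by
  have h1 : ¬ (k + (j:ℕ) < k) := by omega
  have h2 : ¬ (k + (i:ℕ) < k) := by omega
  have h3 : ¬ (k + (i:ℕ) = k + t) := by have := i.isLt; omega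
  have h4 : ¬ (k + (j:ℕ) = k + t) := by have := j.isLt; omega
  simp [Phi, h1, h2, h3, h4, i.isLt.ne, j.isLt.ne]

theorem Phi_ML (i : Fin t) : Phi p k t x (iM k t i) (iL k t) = 0 := by
  have h1 : ¬ (k + t < k) := by omega
  have h2 : ¬ (k + (i:ℕ) < k) := by omega
  have h3 : ¬ (k + (i:ℕ) = k + t) := by have := i.isLt; omega
  simp [Phi, h1, h2, h3, i.isLt.ne]

theorem Phi_LM (j : Fin t) : Phi p k t x (iL k t) (iM k t j) = x.2.2.2 j := by
  have h1 : ¬ (k + (j:ℕ) < k) := by omega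
  have h2 : ¬ (k + t < k) := by omega
  have h3 : ¬ (k + (j:ℕ) = k + t) := by have := j.isLt; omega
  simp [Phi, h1, h2, h3, j.isLt.ne]

theorem Phi_LL : Phi p k t x (iL k t) (iL k t) = lA x.1 := by
  have h2 : ¬ (k + t < k) := by omega
  simp [Phi, h2]

theorem mul_apply_tr {A : Matrix (Fin k) (Fin k) (ZMod p)} (a b : Fin k) :
    (Aᵀ * A) a b = ∑ m, A m a * A m b := by
  rw [Matrix.mul_apply]
  simp [Matrix.transpose_apply]

theorem Phi_cond [Fact p.Prime] (hk1 : 1 ≤ k) :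
    CondP p k (Phi p k t x) := by
  obtain ⟨hlne, hAA⟩ := lA_spec x.1
  refine ⟨lA x.1, hlne, ?_, ?_⟩
  · ext i j
    rw [quad_entry]
    have hRHS : (lA x.1 • Dmat p k (k+t+1)) i j
        = lA x.1 * (if i = j then dvec p k 1 (i : ℕ) else 0) := by
      simp [Dmat, Matrix.diagonal_apply, Matrix.smul_apply]
    rw [hRHS]
    rcases caseFin i with ⟨a, rfl⟩ | ⟨a, rfl⟩ | rfl
    · rcases caseFin j with ⟨b, rfl⟩ | ⟨b, rfl⟩ | rfl
      · simp only [Phi_TT]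
        have h1 : ∑ m, x.1.1 m a * x.1.1 m b = (x.1.1ᵀ * x.1.1) a b := (mul_apply_tr a b).symm
        rw [h1, hAA]
        have h2 : (iT k t a = iT k t b) ↔ a = b := by
          constructor
          · intro h; exact Fin.ext (by simpa [Fin.ext_iff] using h)
          · rintro rfl; rfl
        by_cases hab : a = b
        · subst hab
          simp [Matrix.smul_apply, Matrix.one_apply, dvec_lt a.isLt]
        · simp [Matrix.smul_apply, Matrix.one_apply, hab, h2]
      · have hz : ∀ m : Fin k, Phi p k t x (iT k t m) (iT k t a) *
            Phi p k t x (iT k t m) (iM k t b) = 0 := by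
          intro m; rw [Phi_TM, mul_zero]
        have hne : ¬ (iT k t a = iM k t b) := by
          simp [Fin.ext_iff]; omega
        simp [hz, hne]
      · have hz : ∀ m : Fin k, Phi p k t x (iT k t m) (iT k t a) *
            Phi p k t x (iT k t m) (iL k t) = 0 := by
          intro m; rw [Phi_TL, mul_zero]
        have hne : ¬ (iT k t a = iL k t) := by
          simp [Fin.ext_iff]; omega
        simp [hz, hne]
    · have hz : ∀ m : Fin k, Phi p k t x (iT k t m) (iM k t a) *
          Phi p k t x (iT k t m) j = 0 := by
        intro m; rw [Phi_TM, zero_mul]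
      have hd : dvec p k 1 (k + (a : ℕ)) = 0 := dvec_ge (by omega)
      simp [hz, hd]
    · have hz : ∀ m : Fin k, Phi p k t x (iT k t m) (iL k t) *
          Phi p k t x (iT k t m) j = 0 := by
        intro m; rw [Phi_TL, zero_mul]
      have hd : dvec p k 1 (k + t) = 0 := dvec_ge (by omega)
      simp [hz, hd]
  · funext i
    rw [col_entry]
    have hR : (lA x.1 • e1v p (k+t+1)) i = lA x.1 * (if i = iL k t then 1 else 0) := by
      rw [Pi.smul_apply, smul_eq_mul, e1v_eq]
    rw [hR]
    rcases caseFin i with ⟨a, rfl⟩ | ⟨a, rfl⟩ | rfl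
    · have hne : ¬ (iT k t a = iL k t) := by simp [Fin.ext_iff]; omega
      simp [Phi_TL, hne]
    · have hne : ¬ (iM k t a = iL k t) := by
        simp [Fin.ext_iff]; have := a.isLt; omega
      simp [Phi_ML, hne]
    · simp [Phi_LL]

theorem Phi_isUnit [Fact p.Prime] (hk1 : 1 ≤ k) :
    IsUnit (Phi p k t x) := by
  obtain ⟨hlne, hAA⟩ := lA_spec x.1
  rw [Matrix.isUnit_iff_isUnit_det, isUnit_iff_ne_zero]
  intro hdet
  obtain ⟨v, hv0, hv⟩ := (Matrix.exists_mulVec_eq_zero_iff).mpr hdet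
  have hrow : ∀ i : Fin (k+t+1),
      (∑ a : Fin k, Phi p k t x i (iT k t a) * v (iT k t a)) +
      (∑ b : Fin t, Phi p k t x i (iM k t b) * v (iM k t b)) +
      Phi p k t x i (iL k t) * v (iL k t) = 0 := by
    intro i
    have h := congrFun hv i
    rw [Pi.zero_apply] at h
    rw [← h]
    show _ = ∑ j, Phi p k t x i j * v j
    rw [sum_split (fun j => Phi p k t x i j * v j)]
  have hvT : ∀ a : Fin k, v (iT k t a) = 0 := by
    have hmv : x.1.1 *ᵥ (fun a => v (iT k t a)) = 0 := by
      funext i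
      have h := hrow (iT k t i)
      simp only [Phi_TM, Phi_TL, zero_mul, Finset.sum_const_zero, add_zero] at h
      simpa [Matrix.mulVec, dotProduct, Phi_TT] using h
    intro a
    have := mulVec_eq_zero_of_unit (isUnit_of_orth hlne hAA) hmv
    exact congrFun this a
  have hvM : ∀ b : Fin t, v (iM k t b) = 0 := by
    have hmv : (x.2.2.1 : Matrix (Fin t) (Fin t) (ZMod p)) *ᵥ (fun b => v (iM k t b)) = 0 := by
      funext i
      have h := hrow (iM k t i)
      simp only [Phi_ML, zero_mul, add_zero, hvT, mul_zero, Finset.sum_const_zero,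
        zero_add] at h
      simpa [Matrix.mulVec, dotProduct, Phi_MM] using h
    intro b
    have := mulVec_eq_zero_of_unit x.2.2.1.isUnit hmv
    exact congrFun this b
  have hvL : v (iL k t) = 0 := by
    have h := hrow (iL k t)
    simp only [hvT, hvM, mul_zero, Finset.sum_const_zero, zero_add, Phi_LL] at h
    exact (mul_eq_zero.mp h).resolve_left hlne
  apply hv0
  funext i
  rcases caseFin i with ⟨a, rfl⟩ | ⟨a, rfl⟩ | rfl
  · exact hvT a
  · exact hvM a
  · exact hvL

end PhiEntries

theorem Phi_injective [Fact p.Prime] (hk1 : 1 ≤ k) :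
    Function.Injective (Phi p k t) := by
  intro x y h
  obtain ⟨A, C, E, g⟩ := x
  obtain ⟨A', C', E', g'⟩ := y
  have hA : A = A' := by
    apply Subtype.ext
    ext i j
    have h2 := congrFun (congrFun h (iT k t i)) (iT k t j)
    simpa [Phi_TT] using h2
  have hC : C = C' := by
    ext i j
    induction i using Fin.lastCases with
    | last =>
      have h2 := congrFun (congrFun h (iL k t)) (iT k t j)
      rw [Phi_LT, Phi_LT] at h2
      exact h2
    | cast i =>
      have h2 := congrFun (congrFun h (iM k t i)) (iT k t j)
      rw [Phi_MT, Phi_MT] at h2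
      exact h2
  have hE : E = E' := by
    apply Units.ext
    ext i j
    have h2 := congrFun (congrFun h (iM k t i)) (iM k t j)
    rw [Phi_MM, Phi_MM] at h2
    exact h2
  have hg : g = g' := by
    funext j
    have h2 := congrFun (congrFun h (iL k t)) (iM k t j)
    rw [Phi_LM, Phi_LM] at h2
    exact h2
  rw [hA, hC, hE, hg]

theorem Phi_surjective [Fact p.Prime] (hk1 : 1 ≤ k)
    (P : Matrix (Fin (k+t+1)) (Fin (k+t+1)) (ZMod p)) (hC : CondP p k P) (hU : IsUnit P) :
    ∃ x, Phi p k t x = P := by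
  obtain ⟨l, hl, hquad, hcol⟩ := hC
  have hquadE : ∀ i j, ∑ m : Fin k, P (iT k t m) i * P (iT k t m) j
      = l * (if i = j then dvec p k 1 (i : ℕ) else 0) := by
    intro i j
    have h := congrFun (congrFun hquad i) j
    rw [quad_entry] at h
    rw [h]
    simp [Dmat, Matrix.diagonal_apply, Matrix.smul_apply]
  set A : Matrix (Fin k) (Fin k) (ZMod p) :=
    Matrix.of (fun i j => P (iT k t i) (iT k t j)) with hAdef
  have hAA : Aᵀ * A = l • 1 := by
    ext a b
    rw [mul_apply_tr]
    have h := hquadE (iT k t a) (iT k t b)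
    have h2 : (∑ m : Fin k, A m a * A m b)
        = ∑ m : Fin k, P (iT k t m) (iT k t a) * P (iT k t m) (iT k t b) := rfl
    rw [h2, h]
    have h3 : (iT k t a = iT k t b) ↔ a = b := by
      constructor
      · intro hh; exact Fin.ext (by simpa [Fin.ext_iff] using hh)
      · rintro rfl; rfl
    by_cases hab : a = b
    · subst hab
      simp [Matrix.smul_apply, Matrix.one_apply, dvec_lt a.isLt]
    · simp [Matrix.smul_apply, Matrix.one_apply, hab, h3]
  have hAunit : IsUnit A := isUnit_of_orth hl hAA
  have hAtunit : IsUnit Aᵀ := by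
    rw [Matrix.isUnit_iff_isUnit_det, Matrix.det_transpose,
      ← Matrix.isUnit_iff_isUnit_det]
    exact hAunit
  have hB : ∀ (i : Fin k) (j : Fin (k+t+1)), ¬ ((j : ℕ) < k) → P (iT k t i) j = 0 := by
    intro i j hj
    have hmv : Aᵀ *ᵥ (fun m => P (iT k t m) j) = 0 := by
      funext a
      show ∑ m, Aᵀ a m * P (iT k t m) j = 0
      have h := hquadE (iT k t a) j
      have hne : ¬ (iT k t a = j) := by
        simp only [Fin.ext_iff, iT_val]
        have := a.isLt; omega
      rw [if_neg hne, mul_zero] at h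
      have h2 : (∑ m : Fin k, Aᵀ a m * P (iT k t m) j)
          = ∑ m : Fin k, P (iT k t m) (iT k t a) * P (iT k t m) j := rfl
      rw [h2, h]
    exact congrFun (mulVec_eq_zero_of_unit hAtunit hmv) i
  have hcolE : ∀ i, P i (iL k t) = if i = iL k t then l else 0 := by
    intro i
    have h := congrFun hcol i
    rw [col_entry] at h
    rw [h, Pi.smul_apply, smul_eq_mul, e1v_eq]
    by_cases hi : i = iL k t <;> simp [hi]
  set E : Matrix (Fin t) (Fin t) (ZMod p) :=
    Matrix.of (fun i j => P (iM k t i) (iM k t j)) with hEdef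
  have hEunit : IsUnit E := by
    rw [Matrix.isUnit_iff_isUnit_det, isUnit_iff_ne_zero]
    intro hdet
    obtain ⟨v, hv0, hv⟩ := (Matrix.exists_mulVec_eq_zero_iff).mpr hdet
    set S := ∑ b : Fin t, P (iL k t) (iM k t b) * v b with hS
    set z : Fin (k+t+1) → ZMod p := fun idx =>
      if (idx : ℕ) < k then 0
      else if (idx : ℕ) = k + t then -(l⁻¹ * S)
      else if hidx : (idx : ℕ) - k < t then v ⟨(idx : ℕ) - k, hidx⟩ else 0 with hzdef
    have hzT : ∀ a : Fin k, z (iT k t a) = 0 := by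
      intro a; simp [hzdef, a.isLt]
    have hzM : ∀ b : Fin t, z (iM k t b) = v b := by
      intro b
      have h1 : ¬ (k + (b : ℕ) < k) := by omega
      have h2 : ¬ (k + (b : ℕ) = k + t) := by have := b.isLt; omega
      have h3 : k + (b : ℕ) - k < t := by have := b.isLt; omega
      simp only [hzdef, iM_val, if_neg h1, if_neg h2, dif_pos h3]
      congr 1
      simp [Fin.ext_iff, b.isLt.ne]
    have hzL : z (iL k t) = -(l⁻¹ * S) := by
      have h1 : ¬ (k + t < k) := by omega
      simp [hzdef, h1]
    have hPz : P *ᵥ z = 0 := by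
      funext i
      show ∑ j, P i j * z j = 0
      rw [sum_split (fun j => P i j * z j)]
      simp only [hzT, hzM, hzL, mul_zero, Finset.sum_const_zero, zero_add]
      rcases caseFin i with ⟨a, rfl⟩ | ⟨a, rfl⟩ | rfl
      · have h1 : ∀ b : Fin t, P (iT k t a) (iM k t b) * v b = 0 := by
          intro b
          rw [hB a _ (by rw [iM_val]; omega), zero_mul]
        rw [hB a _ (by rw [iL_val]; omega)]
        simp [h1]
      · have h1 : (∑ b : Fin t, P (iM k t a) (iM k t b) * v b) = 0 := by
          have h2 := congrFun hv a
          rw [Pi.zero_apply] at h2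
          rw [← h2]
          rfl
        have h3 : P (iM k t a) (iL k t) = 0 := by
          rw [hcolE]
          have : ¬ (iM k t a = iL k t) := by
            simp only [Fin.ext_iff, iM_val, iL_val]
            have := a.isLt; omega
          simp [this]
        rw [h1, h3]
        ring
      · rw [hcolE, if_pos rfl, ← hS]
        field_simp
        ring
    have hz0 : z ≠ 0 := by
      obtain ⟨b, hb⟩ := Function.ne_iff.mp hv0
      intro h0
      apply hb
      have := congrFun h0 (iM k t b)
      rw [hzM] at this
      exact this
    have hdetP : P.det = 0 := (Matrix.exists_mulVec_eq_zero_iff).mp ⟨z, hz0, hPz⟩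
    have := isUnit_iff_ne_zero.mp ((Matrix.isUnit_iff_isUnit_det P).mp hU)
    exact this hdetP
  refine ⟨⟨⟨A, l, hl, hAA⟩,
    Matrix.of (fun i j => P ⟨k + (i : ℕ), by have := i.isLt; omega⟩ (iT k t j)),
    hEunit.unit, fun j => P (iL k t) (iM k t j)⟩, ?_⟩
  have hlA : lA ⟨A, l, hl, hAA⟩ = l := by
    have h := (lA_spec ⟨A, l, hl, hAA⟩).2
    exact smul_one_inj hk1 (h.symm.trans hAA)
  ext i j
  rcases caseFin i with ⟨a, rfl⟩ | ⟨a, rfl⟩ | rfl <;>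
    rcases caseFin j with ⟨b, rfl⟩ | ⟨b, rfl⟩ | rfl
  · rw [Phi_TT]
    rfl
  · rw [Phi_TM]
    exact (hB a _ (by rw [iM_val]; omega)).symm
  · rw [Phi_TL]
    exact (hB a _ (by rw [iL_val]; omega)).symm
  · rw [Phi_MT]
    rfl
  · rw [Phi_MM, IsUnit.unit_spec]
    rfl
  · rw [Phi_ML]
    rw [hcolE]
    have : ¬ (iM k t a = iL k t) := by
      simp only [Fin.ext_iff, iM_val, iL_val]
      have := a.isLt; omega
    simp [this]
  · rw [Phi_LT]
    rfl
  · rw [Phi_LM]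
  · rw [Phi_LL, hlA, hcolE, if_pos rfl]

theorem card_matrix_fin (a b : ℕ) : Nat.card (Matrix (Fin a) (Fin b) (ZMod p)) = p ^ (a * b) := by
  have e : Matrix (Fin a) (Fin b) (ZMod p) ≃ (Fin a → Fin b → ZMod p) := Equiv.refl _
  rw [Nat.card_congr e, Nat.card_fun, Nat.card_fun, Nat.card_zmod, Nat.card_eq_fintype_card,
    Fintype.card_fin, Nat.card_eq_fintype_card, Fintype.card_fin, ← pow_mul, mul_comm]

theorem card_vec_fin (a : ℕ) : Nat.card (Fin a → ZMod p) = p ^ a := by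
  rw [Nat.card_fun, Nat.card_zmod, Nat.card_eq_fintype_card, Fintype.card_fin]

theorem card_cond_eq [Fact p.Prime] (hk1 : 1 ≤ k) :
    Nat.card {P : GL (Fin (k+t+1)) (ZMod p) //
        CondP p k (P : Matrix (Fin (k+t+1)) (Fin (k+t+1)) (ZMod p))} =
      Nat.card (SAset p k) * Nat.card (Matrix (Fin (t+1)) (Fin k) (ZMod p)) *
      Nat.card (GL (Fin t) (ZMod p)) * Nat.card (Fin t → ZMod p) := by
  have E1 : {P : GL (Fin (k+t+1)) (ZMod p) //
      CondP p k (P : Matrix (Fin (k+t+1)) (Fin (k+t+1)) (ZMod p))} ≃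
      {P : Matrix (Fin (k+t+1)) (Fin (k+t+1)) (ZMod p) // CondP p k P ∧ IsUnit P} :=
    { toFun := fun u => ⟨↑u.1, u.2, Units.isUnit u.1⟩
      invFun := fun m => ⟨m.2.2.unit, by
        have h : (m.2.2.unit : Matrix (Fin (k+t+1)) (Fin (k+t+1)) (ZMod p)) = m.1 :=
          IsUnit.unit_spec _
        rw [h]; exact m.2.1⟩
      left_inv := fun u => Subtype.ext (Units.ext ((Units.isUnit u.1).unit_spec))
      right_inv := fun m => Subtype.ext m.2.2.unit_spec }
  have hbij : Function.Bijective (fun x : SAset p k × Matrix (Fin (t+1)) (Fin k) (ZMod p) ×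
      GL (Fin t) (ZMod p) × (Fin t → ZMod p) =>
      (⟨Phi p k t x, Phi_cond x hk1, Phi_isUnit x hk1⟩ :
        {P : Matrix (Fin (k+t+1)) (Fin (k+t+1)) (ZMod p) // CondP p k P ∧ IsUnit P})) := by
    constructor
    · intro a b hab
      exact Phi_injective hk1 (congrArg Subtype.val hab)
    · intro m
      obtain ⟨x, hx⟩ := Phi_surjective hk1 m.1 m.2.1 m.2.2
      exact ⟨x, Subtype.ext hx⟩
  have E2 := Equiv.ofBijective _ hbij
  rw [Nat.card_congr (E1.trans E2.symm), Nat.card_prod, Nat.card_prod, Nat.card_prod]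
  ring

theorem two_ne_zero_zmod [Fact p.Prime] (hodd : Odd p) : (2 : ZMod p) ≠ 0 := by
  have hp2 : p ≠ 2 := by
    rintro rfl
    exact (by norm_num : ¬ Odd 2) hodd
  intro h
  have h2 : ((2 : ℕ) : ZMod p) = 0 := by exact_mod_cast h
  rw [ZMod.natCast_eq_zero_iff] at h2
  exact hp2 ((Nat.prime_dvd_prime_iff_eq Fact.out Nat.prime_two).mp h2)

variable (p k) in
noncomputable def F2 [Fact p.Prime] : (ZMod p)ˣ × {U : Matrix (Fin k) (Fin k) (ZMod p) // Uᵀ * U = 1} →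
    SAset p k :=
  fun y => ⟨(y.1 : ZMod p) • y.2.1, (y.1 : ZMod p) ^ 2, pow_ne_zero _ y.1.ne_zero, by
    rw [Matrix.transpose_smul, Matrix.smul_mul, Matrix.mul_smul, y.2.2, smul_smul, sq]⟩

theorem F2_fiber_card [Fact p.Prime] (hodd : Odd p) (hk1 : 1 ≤ k) (hkodd : Odd k)
    (A : SAset p k) : Nat.card {y : (ZMod p)ˣ ×
      {U : Matrix (Fin k) (Fin k) (ZMod p) // Uᵀ * U = 1} // F2 p k y = A} = 2 := by
  obtain ⟨hl, hAA⟩ := lA_spec A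
  set l := lA A with hldef
  have hdet0 : A.1.det ≠ 0 :=
    isUnit_iff_ne_zero.mp ((Matrix.isUnit_iff_isUnit_det _).mp (isUnit_of_orth hl hAA))
  have hdet2 : A.1.det ^ 2 = l ^ k := sq_det_of_orth hAA
  obtain ⟨m, hm⟩ := hkodd
  set μ : ZMod p := A.1.det * (l ^ m)⁻¹ with hμdef
  have hlm : l ^ m ≠ 0 := pow_ne_zero _ hl
  have hμ0 : μ ≠ 0 := mul_ne_zero hdet0 (inv_ne_zero hlm)
  have hμ2 : μ ^ 2 = l := by
    have h1 : μ ^ 2 * l ^ (m * 2) = l ^ k := by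
      have h0 : μ ^ 2 * l ^ (m * 2) = A.1.det ^ 2 * ((l ^ m)⁻¹ * l ^ m) ^ 2 := by
        rw [hμdef, pow_mul]; ring
      rw [h0, inv_mul_cancel₀ hlm, one_pow, mul_one, hdet2]
    have h2 : l ^ k = l * l ^ (m * 2) := by
      rw [mul_comm l, ← pow_succ]
      congr 1
      omega
    rw [h2] at h1
    exact mul_right_cancel₀ (pow_ne_zero _ hl) h1
  set U0 : Matrix (Fin k) (Fin k) (ZMod p) := μ⁻¹ • A.1 with hU0def
  have hU0 : U0ᵀ * U0 = 1 := by
    rw [hU0def, Matrix.transpose_smul, Matrix.smul_mul, Matrix.mul_smul, hAA,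
      smul_smul, smul_smul]
    have h9 : μ⁻¹ * μ⁻¹ * l = 1 := by
      rw [← hμ2]
      field_simp
    rw [h9, one_smul]
  set y0 : (ZMod p)ˣ × {U : Matrix (Fin k) (Fin k) (ZMod p) // Uᵀ * U = 1} :=
    (Units.mk0 μ hμ0, ⟨U0, hU0⟩) with hy0def
  set y1 : (ZMod p)ˣ × {U : Matrix (Fin k) (Fin k) (ZMod p) // Uᵀ * U = 1} :=
    (Units.mk0 (-μ) (neg_ne_zero.mpr hμ0), ⟨-U0, by
      rw [Matrix.transpose_neg, Matrix.neg_mul, Matrix.mul_neg, neg_neg, hU0]⟩) with hy1def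
  have hy0 : F2 p k y0 = A := by
    apply Subtype.ext
    show μ • U0 = A.1
    rw [hU0def, smul_smul, mul_inv_cancel₀ hμ0, one_smul]
  have hy1 : F2 p k y1 = A := by
    apply Subtype.ext
    show (-μ) • (-U0) = A.1
    rw [smul_neg, neg_smul, neg_neg, hU0def, smul_smul, mul_inv_cancel₀ hμ0, one_smul]
  have hμne : μ ≠ -μ := by
    intro h
    have h2 : (2 : ZMod p) * μ = 0 := by linear_combination h
    rcases mul_eq_zero.mp h2 with h3 | h3
    · exact two_ne_zero_zmod hodd h3
    · exact hμ0 h3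
  have hne : y0 ≠ y1 := by
    intro h
    apply hμne
    have := congrArg (fun z => ((z.1 : (ZMod p)ˣ) : ZMod p)) h
    simpa [hy0def, hy1def] using this
  have hclass : ∀ y, F2 p k y = A → y = y0 ∨ y = y1 := by
    rintro ⟨ν, V, hV⟩ hy
    have hval : (ν : ZMod p) • V = A.1 := congrArg Subtype.val hy
    set c : ZMod p := (ν : ZMod p)⁻¹ * μ with hcdef
    have hcV : V = c • U0 := by
      have h1 : V = (ν : ZMod p)⁻¹ • ((ν : ZMod p) • V) := by
        rw [smul_smul, inv_mul_cancel₀ ν.ne_zero, one_smul]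
      rw [h1, hval]
      have h2 : A.1 = μ • U0 := by
        rw [hU0def, smul_smul, mul_inv_cancel₀ hμ0, one_smul]
      rw [h2, smul_smul, hcdef]
    have hc2 : c ^ 2 = 1 := by
      have h1 : (c • U0)ᵀ * (c • U0) = 1 := by rw [← hcV]; exact hV
      rw [Matrix.transpose_smul, Matrix.smul_mul, Matrix.mul_smul, hU0, smul_smul] at h1
      have h2 : (c * c) • (1 : Matrix (Fin k) (Fin k) (ZMod p)) =
          (1 : ZMod p) • (1 : Matrix (Fin k) (Fin k) (ZMod p)) := by
        rw [one_smul]; exact h1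
      have h3 := smul_one_inj hk1 h2
      rw [← sq] at h3
      exact h3
    rcases mul_self_eq_one_iff.mp (show c * c = 1 by rw [← sq]; exact hc2) with h | h
    · left
      have hνμ : (ν : ZMod p) = μ := by
        have := congrArg (fun z => (ν : ZMod p) * z) h
        simp only [mul_one] at this
        rw [hcdef, ← mul_assoc, mul_inv_cancel₀ ν.ne_zero, one_mul] at this
        exact this.symm
      have hVU : V = U0 := by rw [hcV, h, one_smul]
      rw [hy0def]
      exact Prod.ext (Units.ext hνμ) (Subtype.ext hVU)
    · right
      have hνμ : (ν : ZMod p) = -μ := by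
        have h3 := congrArg (fun z => (ν : ZMod p) * z) h
        rw [hcdef, ← mul_assoc, mul_inv_cancel₀ ν.ne_zero, one_mul] at h3
        rw [h3]
        ring
      have hVU : V = -U0 := by rw [hcV, h, neg_smul, one_smul]
      rw [hy1def]
      exact Prod.ext (Units.ext hνμ) (Subtype.ext hVU)
  rw [Nat.card_eq_two_iff]
  refine ⟨⟨y0, hy0⟩, ⟨y1, hy1⟩, fun h => hne (congrArg Subtype.val h), ?_⟩
  apply Set.eq_univ_of_forall
  rintro ⟨y, hy⟩
  rcases hclass y hy with h | h
  · exact Set.mem_insert_iff.mpr (Or.inl (Subtype.ext h))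
  · exact Set.mem_insert_iff.mpr (Or.inr (Subtype.ext h))

theorem card_SA [Fact p.Prime] (hodd : Odd p) (hk1 : 1 ≤ k) (hkodd : Odd k) :
    2 * Nat.card (SAset p k) =
      (p - 1) * Nat.card {U : Matrix (Fin k) (Fin k) (ZMod p) // Uᵀ * U = 1} := by
  classical
  haveI : Fintype (SAset p k) := Fintype.ofFinite _
  haveI : ∀ A : SAset p k, Fintype {y : (ZMod p)ˣ ×
      {U : Matrix (Fin k) (Fin k) (ZMod p) // Uᵀ * U = 1} // F2 p k y = A} :=
    fun A => Fintype.ofFinite _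
  have e := (Equiv.sigmaFiberEquiv (F2 p k)).symm
  have h1 : Nat.card ((ZMod p)ˣ × {U : Matrix (Fin k) (Fin k) (ZMod p) // Uᵀ * U = 1})
      = ∑ A : SAset p k, Nat.card {y : (ZMod p)ˣ ×
        {U : Matrix (Fin k) (Fin k) (ZMod p) // Uᵀ * U = 1} // F2 p k y = A} := by
    rw [Nat.card_congr e, Nat.card_eq_fintype_card, Fintype.card_sigma]
    apply Finset.sum_congr rfl
    intro A _
    rw [Nat.card_eq_fintype_card]
  have h2 : (∑ A : SAset p k, Nat.card {y : (ZMod p)ˣ ×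
      {U : Matrix (Fin k) (Fin k) (ZMod p) // Uᵀ * U = 1} // F2 p k y = A})
      = 2 * Nat.card (SAset p k) := by
    have hfib : ∀ A : SAset p k, Nat.card {y : (ZMod p)ˣ ×
        {U : Matrix (Fin k) (Fin k) (ZMod p) // Uᵀ * U = 1} // F2 p k y = A} = 2 :=
      F2_fiber_card hodd hk1 hkodd
    simp only [hfib]
    rw [Finset.sum_const, Finset.card_univ, smul_eq_mul, Nat.card_eq_fintype_card, mul_comm]
  have h3 : Nat.card ((ZMod p)ˣ × {U : Matrix (Fin k) (Fin k) (ZMod p) // Uᵀ * U = 1})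
      = (p - 1) * Nat.card {U : Matrix (Fin k) (Fin k) (ZMod p) // Uᵀ * U = 1} := by
    rw [Nat.card_prod]
    congr 1
    rw [Nat.card_eq_fintype_card, ZMod.card_units]
  rw [← h2, ← h1, h3]

theorem count_cond (t : ℕ) [Fact p.Prime] (hodd : Odd p) (hk1 : 1 ≤ k) (hkodd : Odd k) :
    Nat.card {P : GL (Fin (k+t+1)) (ZMod p) //
        CondP p k (P : Matrix (Fin (k+t+1)) (Fin (k+t+1)) (ZMod p))} =
      ((p - 1) / 2) * Nat.card {U : Matrix (Fin k) (Fin k) (ZMod p) // Uᵀ * U = 1} *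
        Nat.card (GL (Fin t) (ZMod p)) * p ^ (k * t + (k + t)) := by
  rw [card_cond_eq hk1, card_matrix_fin, card_vec_fin]
  have hSA : Nat.card (SAset p k) =
      ((p - 1) / 2) * Nat.card {U : Matrix (Fin k) (Fin k) (ZMod p) // Uᵀ * U = 1} := by
    have h := card_SA hodd hk1 hkodd
    have hp1 : p - 1 = 2 * ((p - 1) / 2) := by
      obtain ⟨m, hm⟩ := hodd
      omega
    rw [hp1, mul_assoc] at h
    exact Nat.eq_of_mul_eq_mul_left (by norm_num) h
  rw [hSA]
  have hpow : p ^ (k * t + (k + t)) = p ^ ((t + 1) * k) * p ^ t := by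
    rw [← pow_add]
    congr 1
    ring
  rw [hpow]
  ring

end Count

end Aux

/-- For `k` odd, the number of distinct conjugates of `T(n,k,1)`
under `Q_P` for `P ∈ GL_n(Fp)` equals `|GL_n|` divided by
`((p-1)/2)·|O_k|·|GL_{n-1-k}|·p^{k(n-1-k)+(n-1)}`. -/
theorem stmt_8 (p : ℕ) (hp : p.Prime) (hodd : Odd p) (n k : ℕ)
    (hn : 2 ≤ n) (hk1 : 1 ≤ k) (hk2 : k ≤ n - 1) (hkodd : Odd k) :
    Nat.card (Set.range fun P : GL (Fin n) (ZMod p) =>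
        (fun M => QofP p n (P : Matrix (Fin n) (Fin n) (ZMod p)) * M *
            (QofP p n (P : Matrix (Fin n) (Fin n) (ZMod p)))⁻¹) ''
          Tset p n k 1) =
      Nat.card (GL (Fin n) (ZMod p)) /
        (((p - 1) / 2) *
          Nat.card {U : Matrix (Fin k) (Fin k) (ZMod p) // Uᵀ * U = 1} *
          Nat.card (GL (Fin (n - 1 - k)) (ZMod p)) *
          p ^ (k * (n - 1 - k) + (n - 1))) := by
  haveI : Fact p.Prime := ⟨hp⟩
  obtain ⟨t, rfl⟩ : ∃ t, n = k + t + 1 := ⟨n - k - 1, by omega⟩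
  have e1 : k + t + 1 - 1 - k = t := by omega
  have e2 : k + t + 1 - 1 = k + t := by omega
  rw [e1, e2, card_range_eq_div p (k+t+1) k hk1 hk2 hn, count_cond t hodd hk1 hkodd]
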